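/- Let Γ be an n×n positive semidefinite complex matrix with diagonal entries satisfying 0 ≤ Γ_{ii} ≤ 1 for all i. Then for every positive semidefinite matrix M, the eigenvalue vector of Γ ∘ M is weakly majorized by the eigenvalue vector of M. -/

import Mathlib

open Matrix ComplexOrder

namespace Matrix.PosSemidef

/-- The positive semidefinite square root, as defined in the older Mathlib (removed since). -/
noncomputable def sqrt {n 𝕜 : Type*} [Fintype n] [DecidableEq n] [RCLike 𝕜]
    {A : Matrix n n 𝕜} (hA : A.PosSemidef) : Matrix n n 𝕜 :=
  hA.1.eigenvectorUnitary.1 * diagonal ((↑) ∘ (√·) ∘ hA.1.eigenvalues) *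
  (star hA.1.eigenvectorUnitary : Matrix n n 𝕜)

lemma posSemidef_sqrt {n 𝕜 : Type*} [Fintype n] [DecidableEq n] [RCLike 𝕜]
    {A : Matrix n n 𝕜} (hA : A.PosSemidef) : PosSemidef hA.sqrt := by
  apply PosSemidef.mul_mul_conjTranspose_same
  refine posSemidef_diagonal_iff.mpr fun i ↦ ?_
  rw [Function.comp_apply, RCLike.nonneg_iff]
  constructor
  · simp only [RCLike.ofReal_re]
    exact Real.sqrt_nonneg _
  · simp only [RCLike.ofReal_im]

lemma sqrt_mul_self {n 𝕜 : Type*} [Fintype n] [DecidableEq n] [RCLike 𝕜]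
    {A : Matrix n n 𝕜} (hA : A.PosSemidef) : hA.sqrt * hA.sqrt = A := by
  have hU : (star hA.1.eigenvectorUnitary : Matrix n n 𝕜) * hA.1.eigenvectorUnitary.1 = 1 :=
    Unitary.coe_star_mul_self _
  unfold sqrt
  conv_rhs => rw [hA.1.spectral_theorem, Unitary.conjStarAlgAut_apply]
  simp only [mul_assoc]
  rw [← mul_assoc (star hA.1.eigenvectorUnitary : Matrix n n 𝕜) hA.1.eigenvectorUnitary.1, hU,
    one_mul, ← mul_assoc (diagonal _) (diagonal _), diagonal_mul_diagonal]
  congr 3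
  funext i
  simp only [Function.comp_apply, ← RCLike.ofReal_mul]
  rw [Real.mul_self_sqrt (hA.eigenvalues_nonneg i)]

end Matrix.PosSemidef

namespace Heron

variable {n : ℕ}

def WeakMaj {n : ℕ} (x y : Fin n → ℝ) : Prop :=
  ∀ s : Finset (Fin n), ∃ t : Finset (Fin n),
    t.card = s.card ∧ ∑ i ∈ s, x i ≤ ∑ i ∈ t, y i

def Maj {n : ℕ} (x y : Fin n → ℝ) : Prop :=
  WeakMaj x y ∧ ∑ i, x i = ∑ i, y i

lemma sandwich_posSemidef {S T : Matrix (Fin n) (Fin n) ℂ} (hS : S.IsHermitian)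
    (hT : T.PosSemidef) : (S * T * S).PosSemidef := by
  have h := hT.mul_mul_conjTranspose_same S
  rwa [hS.eq] at h

noncomputable def geomMean {A B : Matrix (Fin n) (Fin n) ℂ}
    (hA : A.PosDef) (hB : B.PosDef) : Matrix (Fin n) (Fin n) ℂ :=
  hA.posSemidef.sqrt *
    (sandwich_posSemidef hA.posSemidef.posSemidef_sqrt.isHermitian.inv
        hB.posSemidef).sqrt *
    hA.posSemidef.sqrt

lemma geomMean_posSemidef {A B : Matrix (Fin n) (Fin n) ℂ}
    (hA : A.PosDef) (hB : B.PosDef) : (geomMean hA hB).PosSemidef :=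
  sandwich_posSemidef hA.posSemidef.posSemidef_sqrt.isHermitian
    (Matrix.PosSemidef.posSemidef_sqrt _)

noncomputable def specMean {A B : Matrix (Fin n) (Fin n) ℂ}
    (hA : A.PosDef) (hB : B.PosDef) : Matrix (Fin n) (Fin n) ℂ :=
  (geomMean_posSemidef hA.inv hB).sqrt * A * (geomMean_posSemidef hA.inv hB).sqrt

def HasPosSpectrum (M : Matrix (Fin n) (Fin n) ℂ) : Prop :=
  ∀ z ∈ spectrum ℂ M, 0 < z.re ∧ z.im = 0

def IsPrincipalSqrt (M S : Matrix (Fin n) (Fin n) ℂ) : Prop :=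
  S * S = M ∧ HasPosSpectrum S

noncomputable def absMat (Y : Matrix (Fin n) (Fin n) ℂ) : Matrix (Fin n) (Fin n) ℂ :=
  (Matrix.posSemidef_conjTranspose_mul_self Y).sqrt

noncomputable def posPart (H : Matrix (Fin n) (Fin n) ℂ) : Matrix (Fin n) (Fin n) ℂ :=
  ((1 : ℂ) / 2) • (absMat H + H)

open Finset in
/-- Schur product theorem. -/
lemma hadamard_psd {N : ℕ} {A B : Matrix (Fin N) (Fin N) ℂ}
    (hA : A.PosSemidef) (hB : B.PosSemidef) : (Matrix.hadamard A B).PosSemidef := by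
  refine posSemidef_iff_dotProduct_mulVec.mpr ⟨?_, ?_⟩
  · ext i j
    simp only [conjTranspose_apply, Matrix.hadamard_apply, star_mul']
    rw [hA.1.apply, hB.1.apply]
  · intro x
    set S := hA.sqrt with hS
    have hs : S * S = A := hA.sqrt_mul_self
    have hSh : S.IsHermitian := hA.posSemidef_sqrt.1
    have hAij : ∀ i j, A i j = ∑ r, star (S r i) * S r j := by
      intro i j
      rw [← hs, Matrix.mul_apply]
      exact Finset.sum_congr rfl fun r _ => by rw [hSh.apply]
    have key : ∑ r, star (fun i => S r i * x i) ⬝ᵥ B *ᵥ (fun i => S r i * x i)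
        = star x ⬝ᵥ (Matrix.hadamard A B) *ᵥ x := by
      simp only [dotProduct, mulVec, Pi.star_apply, Matrix.hadamard_apply, hAij,
        Finset.sum_mul, Finset.mul_sum, star_mul']
      rw [Finset.sum_comm]
      refine Finset.sum_congr rfl fun i _ => ?_
      rw [Finset.sum_comm]
      refine Finset.sum_congr rfl fun j _ => Finset.sum_congr rfl fun r _ => by ring
    rw [← key]
    exact Finset.sum_nonneg fun r _ => hB.dotProduct_mulVec_nonneg _

lemma psd_add {N : ℕ} {A B : Matrix (Fin N) (Fin N) ℂ}
    (hA : A.PosSemidef) (hB : B.PosSemidef) : (A + B).PosSemidef := by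
  refine ⟨hA.1.add hB.1, fun x => ?_⟩
  have := add_le_add (hA.2 x) (hB.2 x)
  exact (hA.add hB).2 x

/-- diagonal entries of a PSD matrix are nonneg (as complex numbers). -/
lemma psd_diag_nonneg {N : ℕ} {A : Matrix (Fin N) (Fin N) ℂ}
    (hA : A.PosSemidef) (i : Fin N) : 0 ≤ A i i := by
  have := hA.dotProduct_mulVec_nonneg (Pi.single i 1)
  simpa [dotProduct, mulVec, Pi.single_apply, Finset.sum_ite_eq, Finset.sum_ite_eq'] using this

open Finset in
lemma real_key {N : ℕ} (lam q : Fin N → ℝ) (hlam : ∀ i, 0 ≤ lam i)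
    (hq0 : ∀ i, 0 ≤ q i) (hq1 : ∀ i, q i ≤ 1) (k : ℕ) (hk : k ≤ N)
    (hsum : ∑ i, q i ≤ k) :
    ∃ t : Finset (Fin N), t.card = k ∧ ∑ i, lam i * q i ≤ ∑ i ∈ t, lam i := by
  rcases Nat.eq_zero_or_pos k with hk0 | hkpos
  · subst hk0
    refine ⟨∅, by simp, ?_⟩
    have hz : ∑ i, q i = 0 :=
      le_antisymm (by simpa using hsum) (Finset.sum_nonneg fun i _ => hq0 i)
    have hq : ∀ i, q i = 0 := by
      intro i
      have := (Finset.sum_eq_zero_iff_of_nonneg (fun i _ => hq0 i)).mp hz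
      exact this i (Finset.mem_univ i)
    simp [hq]
  · obtain ⟨t0, -, ht0⟩ :=
      Finset.exists_subset_card_eq (s := (Finset.univ : Finset (Fin N))) (by simpa using hk)
    have hne : (Finset.powersetCard k (Finset.univ : Finset (Fin N))).Nonempty :=
      ⟨t0, Finset.mem_powersetCard.mpr ⟨Finset.subset_univ _, ht0⟩⟩
    obtain ⟨t, htmem, hmax⟩ :=
      Finset.exists_max_image _ (fun u => ∑ i ∈ u, lam i) hne
    have htk : t.card = k := (Finset.mem_powersetCard.mp htmem).2
    have htne : t.Nonempty := Finset.card_pos.mp (htk ▸ hkpos)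
    obtain ⟨j, hjt, hjmin⟩ := Finset.exists_min_image t lam htne
    have hout : ∀ i ∉ t, lam i ≤ lam j := by
      intro i hi
      by_contra hcon
      push_neg at hcon
      set t' := insert i (t.erase j) with ht'
      have hinot : i ∉ t.erase j := fun h => hi (Finset.mem_of_mem_erase h)
      have ht'card : t'.card = k := by
        rw [ht', Finset.card_insert_of_notMem hinot, Finset.card_erase_of_mem hjt, htk]
        omega
      have ht'mem : t' ∈ Finset.powersetCard k (Finset.univ : Finset (Fin N)) :=
        Finset.mem_powersetCard.mpr ⟨Finset.subset_univ _, ht'card⟩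
      have hsum' : ∑ x ∈ t', lam x = lam i + (∑ x ∈ t, lam x - lam j) := by
        rw [ht', Finset.sum_insert hinot]
        have := Finset.sum_erase_add t lam hjt
        linarith
      have := hmax t' ht'mem
      simp only [hsum'] at this
      linarith
    have hsplit : ∑ i ∈ t, lam i * q i + ∑ i ∈ tᶜ, lam i * q i = ∑ i, lam i * q i :=
      Finset.sum_add_sum_compl t _
    have hqsplit : ∑ i ∈ t, q i + ∑ i ∈ tᶜ, q i = ∑ i, q i :=
      Finset.sum_add_sum_compl t _
    have h1 : ∑ i ∈ tᶜ, lam i * q i ≤ lam j * ∑ i ∈ tᶜ, q i := by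
      rw [Finset.mul_sum]
      exact Finset.sum_le_sum fun i hi =>
        mul_le_mul_of_nonneg_right (hout i (Finset.mem_compl.mp hi)) (hq0 i)
    have h2 : ∑ i ∈ tᶜ, q i ≤ (k : ℝ) - ∑ i ∈ t, q i := by linarith
    have h3 : lam j * ∑ i ∈ tᶜ, q i ≤ lam j * ((k : ℝ) - ∑ i ∈ t, q i) :=
      mul_le_mul_of_nonneg_left h2 (hlam j)
    have h4 : lam j * ((k : ℝ) - ∑ i ∈ t, q i) = ∑ i ∈ t, lam j * (1 - q i) := by
      have hconst : ∑ i ∈ t, ((1 : ℝ) - q i) = (k : ℝ) - ∑ i ∈ t, q i := by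
        rw [Finset.sum_sub_distrib, Finset.sum_const, htk, nsmul_eq_mul, mul_one]
      rw [← Finset.mul_sum, hconst]
    have h5 : ∑ i ∈ t, lam j * (1 - q i) ≤ ∑ i ∈ t, lam i * (1 - q i) :=
      Finset.sum_le_sum fun i hi =>
        mul_le_mul_of_nonneg_right (hjmin i hi) (by linarith [hq1 i])
    have h6 : ∑ i ∈ t, lam i * q i + ∑ i ∈ t, lam i * (1 - q i) = ∑ i ∈ t, lam i := by
      rw [← Finset.sum_add_distrib]
      exact Finset.sum_congr rfl fun i _ => by ring
    exact ⟨t, htk, by linarith⟩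

/-- Schur multiplication by a positive semidefinite matrix with
diagonal entries in `[0,1]` produces a weakly majorized eigenvalue vector. -/
theorem schur_subcorrelation_weak_majorization {n : ℕ}
    (Γ M : Matrix (Fin n) (Fin n) ℂ) (hΓ : Γ.PosSemidef)
    (hdiag : ∀ i, 0 ≤ (Γ i i).re ∧ (Γ i i).re ≤ 1) (hM : M.PosSemidef)
    (hSchur : (Matrix.hadamard Γ M).IsHermitian) :
    WeakMaj hSchur.eigenvalues hM.isHermitian.eigenvalues := by
  intro s
  classical
  set C := Matrix.hadamard Γ M with hC
  set V : Matrix (Fin n) (Fin n) ℂ := (hSchur.eigenvectorUnitary : Matrix (Fin n) (Fin n) ℂ)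
    with hVdef
  have hVV : V * star V = 1 := (Matrix.mem_unitaryGroup_iff).mp hSchur.eigenvectorUnitary.2
  have hVV' : star V * V = 1 := (Matrix.mem_unitaryGroup_iff').mp hSchur.eigenvectorUnitary.2
  set μ := hSchur.eigenvalues with hμ
  set E : Matrix (Fin n) (Fin n) ℂ := Matrix.diagonal (fun i => if i ∈ s then (1:ℂ) else 0)
    with hE
  set E' : Matrix (Fin n) (Fin n) ℂ := Matrix.diagonal (fun i => if i ∈ s then (0:ℂ) else 1)
    with hE'
  have hEE' : E + E' = 1 := by
    have hfun : (fun i => (if i ∈ s then (1:ℂ) else 0) + if i ∈ s then (0:ℂ) else 1)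
        = fun _ => (1:ℂ) := by
      funext i; by_cases h : i ∈ s <;> simp [h]
    rw [hE, hE', Matrix.diagonal_add, hfun, Matrix.diagonal_one]
  set P := V * E * star V with hP
  have hEpsd : E.PosSemidef := by
    refine Matrix.PosSemidef.diagonal fun i => ?_
    by_cases h : i ∈ s <;> simp [h]
  have hE'psd : E'.PosSemidef := by
    refine Matrix.PosSemidef.diagonal fun i => ?_
    by_cases h : i ∈ s <;> simp [h]
  have hPpsd : P.PosSemidef := by
    have := hEpsd.mul_mul_conjTranspose_same V
    rwa [← Matrix.star_eq_conjTranspose] at this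
  have h1P : (1 - P).PosSemidef := by
    have hpsd := hE'psd.mul_mul_conjTranspose_same V
    rw [← Matrix.star_eq_conjTranspose] at hpsd
    have hone : P + V * E' * star V = 1 := by
      have : V * (E + E') * star V = 1 := by rw [hEE', mul_one, hVV]
      rw [mul_add, add_mul] at this
      rw [hP]; exact this
    have key : V * E' * star V = 1 - P := eq_sub_of_add_eq' hone
    rwa [key] at hpsd
  -- trace of P
  have htraceP : P.trace = (s.card : ℂ) := by
    rw [hP, Matrix.trace_mul_cycle, hVV', one_mul, hE, Matrix.trace_diagonal]
    simp
  -- sum over s of eigenvalues equals trace (P * C)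
  have hDiagC : star V * C * V = Matrix.diagonal (RCLike.ofReal ∘ μ) :=
    by have := hSchur.conjStarAlgAut_star_eigenvectorUnitary
       rwa [Unitary.conjStarAlgAut_star_apply] at this
  have hstep1 : (P * C).trace = ∑ i ∈ s, (μ i : ℂ) := by
    rw [hP, mul_assoc (V * E) (star V) C, Matrix.trace_mul_comm, ← Matrix.mul_assoc,
      hDiagC, hE, Matrix.diagonal_mul_diagonal, Matrix.trace_diagonal]
    simp [mul_ite, Finset.sum_ite_mem]
  -- Q := Γᵀ ⊙ P
  set Q := Matrix.hadamard Γᵀ P with hQ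
  have hQpsd : Q.PosSemidef := hadamard_psd hΓ.transpose hPpsd
  have hΓdiag : ∀ i, 0 ≤ Γ i i := fun i => psd_diag_nonneg hΓ i
  have h1Q : (1 - Q).PosSemidef := by
    have hid : 1 - Q = Matrix.hadamard Γᵀ (1 - P)
        + Matrix.diagonal (fun i => 1 - Γ i i) := by
      ext i j
      by_cases h : i = j
      · subst h
        simp [hQ, Matrix.hadamard_apply, Matrix.one_apply, Matrix.sub_apply]
        ring
      · simp [hQ, Matrix.hadamard_apply, Matrix.one_apply, Matrix.sub_apply, h]
    have hd2 : ∀ i, (0:ℂ) ≤ 1 - Γ i i := by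
      intro i
      have him : (Γ i i).im = 0 := by
        have := hΓdiag i
        rw [Complex.le_def] at this
        simpa using this.2.symm
      rw [Complex.le_def]
      constructor
      · simp [(hdiag i).2]
      · simp [him]
    rw [hid]
    exact psd_add (hadamard_psd hΓ.transpose h1P) (Matrix.PosSemidef.diagonal hd2)
  -- trace (P * C) = trace (Q * M)
  have hstep2 : (P * C).trace = (Q * M).trace := by
    simp only [Matrix.trace, Matrix.diag, Matrix.mul_apply, hC, hQ, Matrix.hadamard_apply,
      Matrix.transpose_apply]
    exact Finset.sum_congr rfl fun i _ => Finset.sum_congr rfl fun j _ => by ring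
  -- trace Q bound
  have hPdiag : ∀ i, 0 ≤ P i i := fun i => psd_diag_nonneg hPpsd i
  have htraceQ : (Q.trace).re ≤ (s.card : ℝ) := by
    have h1 : Q.trace = ∑ i, Γ i i * P i i := by
      simp [Matrix.trace, Matrix.diag, hQ, Matrix.hadamard_apply]
    have h2 : (Q.trace).re = ∑ i, (Γ i i).re * (P i i).re := by
      rw [h1, Complex.re_sum]
      refine Finset.sum_congr rfl fun i _ => ?_
      have him : (Γ i i).im = 0 := by
        have := hΓdiag i
        rw [Complex.le_def] at this
        simpa using this.2.symm
      rw [Complex.mul_re, him]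
      ring
    have h3 : ∑ i, (Γ i i).re * (P i i).re ≤ ∑ i, (P i i).re := by
      refine Finset.sum_le_sum fun i _ => ?_
      have hp : 0 ≤ (P i i).re := by
        have := hPdiag i; rw [Complex.le_def] at this; simpa using this.1
      nlinarith [(hdiag i).2, hp]
    have h4 : ∑ i, (P i i).re = (s.card : ℝ) := by
      have : ∑ i, (P i i).re = (P.trace).re := by
        rw [Matrix.trace, Complex.re_sum]; rfl
      rw [this, htraceP]; simp
    rw [h2]; linarith
  -- diagonalize M
  set U : Matrix (Fin n) (Fin n) ℂ :=
    (hM.isHermitian.eigenvectorUnitary : Matrix (Fin n) (Fin n) ℂ) with hUdef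
  have hUU : U * star U = 1 := (Matrix.mem_unitaryGroup_iff).mp hM.isHermitian.eigenvectorUnitary.2
  have hUU' : star U * U = 1 :=
    (Matrix.mem_unitaryGroup_iff').mp hM.isHermitian.eigenvectorUnitary.2
  set lam := hM.isHermitian.eigenvalues with hlamdef
  have hlam : ∀ i, 0 ≤ lam i := fun i => hM.eigenvalues_nonneg i
  set R := star U * Q * U with hR
  have hRpsd : R.PosSemidef := by
    have := hQpsd.conjTranspose_mul_mul_same U
    rwa [← Matrix.star_eq_conjTranspose] at this
  have h1R : (1 - R).PosSemidef := by
    have hpsd := h1Q.conjTranspose_mul_mul_same U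
    rw [← Matrix.star_eq_conjTranspose] at hpsd
    have : star U * (1 - Q) * U = 1 - R := by
      rw [mul_sub, mul_one, sub_mul, hUU', hR]
    rwa [this] at hpsd
  set q : Fin n → ℝ := fun i => (R i i).re with hqdef
  have hq0 : ∀ i, 0 ≤ q i := by
    intro i
    have := psd_diag_nonneg hRpsd i
    rw [Complex.le_def] at this
    simpa [hqdef] using this.1
  have hq1 : ∀ i, q i ≤ 1 := by
    intro i
    have := psd_diag_nonneg h1R i
    rw [Complex.le_def] at this
    have h := this.1
    simp only [Matrix.sub_apply, Matrix.one_apply_eq, Complex.sub_re, Complex.one_re,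
      Complex.zero_re] at h
    simp only [hqdef]
    linarith
  have htrR : R.trace = Q.trace := by
    rw [hR, Matrix.trace_mul_cycle, hUU, one_mul]
  have hqsum : ∑ i, q i ≤ (s.card : ℝ) := by
    have : ∑ i, q i = (R.trace).re := by
      rw [Matrix.trace, Complex.re_sum]; rfl
    rw [this, htrR]; exact htraceQ
  -- trace (Q * M) = ∑ lam i * q i
  have hspecM : M = U * Matrix.diagonal (RCLike.ofReal ∘ lam) * star U :=
    hM.isHermitian.spectral_theorem
  have hstep3 : ((Q * M).trace).re = ∑ i, lam i * q i := by
    have e1 : (Q * M).trace = (R * Matrix.diagonal (RCLike.ofReal ∘ lam)).trace := by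
      conv_lhs => rw [hspecM]
      rw [hR, ← Matrix.mul_assoc, ← Matrix.mul_assoc,
        Matrix.trace_mul_cycle (Q * U) (Matrix.diagonal (RCLike.ofReal ∘ lam)) (star U),
        ← Matrix.mul_assoc]
    have e2 : (R * Matrix.diagonal (RCLike.ofReal ∘ lam)).trace
        = ∑ i, R i i * (lam i : ℂ) := by
      simp [Matrix.trace, Matrix.diag, Matrix.mul_apply, Matrix.diagonal_apply,
        Finset.sum_ite_eq', RCLike.ofReal]
    rw [e1, e2, Complex.re_sum]
    refine Finset.sum_congr rfl fun i _ => ?_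
    rw [show ((lam i : ℝ) : ℂ) = Complex.ofReal (lam i) from rfl]
    rw [Complex.mul_re]
    simp [hqdef]
    ring
  -- apply real lemma
  have hkn : s.card ≤ n := by
    simpa using Finset.card_le_univ s
  obtain ⟨t, htcard, hineq⟩ := real_key lam q hlam hq0 hq1 s.card hkn hqsum
  refine ⟨t, htcard, ?_⟩
  have hfinal : ∑ i ∈ s, μ i = ((P * C).trace).re := by
    rw [hstep1, Complex.re_sum]
    refine Finset.sum_congr rfl fun i _ => by simp
  calc ∑ i ∈ s, μ i = ((P * C).trace).re := hfinal
    _ = ((Q * M).trace).re := by rw [hstep2]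
    _ = ∑ i, lam i * q i := hstep3
    _ ≤ ∑ i ∈ t, lam i := hineq

end Heron
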